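/- Let d ≥ 2 and let {|y_i⟩}_{i=1}^d and {|z_j⟩}_{j=1}^d be two orthonormal bases of ℂ^d. Then ∑_{i=1}^d ∑_{j=1}^d |⟨y_i|z_j⟩| ≤ d·√d, with equality if and only if the two bases are mutually unbiased (i.e. |⟨y_i|z_j⟩| = 1/√d for all i, j). Consequently, the average success probability (1/(2d²))·∑_{i,j} λ_max(|y_i⟩⟨y_i| + |z_j⟩⟨z_j|) of a 2^d→1 quantum random access code with these measurement bases is at most (1/2)(1 + 1/√d), with equality exactly for mutually unbiased bases. -/

import Mathlib

open scoped InnerProductSpace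

/-- The rank-one projection matrix `|v⟩⟨v|` associated to a vector `v ∈ ℂ^d`. -/
noncomputable def projMat {d : ℕ} (v : EuclideanSpace ℂ (Fin d)) : Matrix (Fin d) (Fin d) ℂ :=
  fun i j => v i * (starRingEnd ℂ) (v j)

/-- The largest eigenvalue of a Hermitian matrix (junk value `0` otherwise). -/
noncomputable def lamMax {d : ℕ} (M : Matrix (Fin d) (Fin d) ℂ) : ℝ :=
  if h : M.IsHermitian then ⨆ i, h.eigenvalues i else 0

open Matrix

lemma projMat_isHermitian {d : ℕ} (v : EuclideanSpace ℂ (Fin d)) : (projMat v).IsHermitian := by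
  ext i j
  simp [projMat, Matrix.conjTranspose_apply, mul_comm]

lemma mulVec_projMat {d : ℕ} (v x : EuclideanSpace ℂ (Fin d)) :
    (projMat v) *ᵥ (x : Fin d → ℂ) = ⟪v, x⟫_ℂ • (v : Fin d → ℂ) := by
  funext i
  simp only [Matrix.mulVec, dotProduct, projMat, PiLp.inner_apply, Pi.smul_apply,
    smul_eq_mul, RCLike.inner_apply, PiLp.smul_apply]
  rw [Finset.sum_mul]
  exact Finset.sum_congr rfl fun j _ => by ring

lemma exists_eigenvalue_eq {d : ℕ} {M : Matrix (Fin d) (Fin d) ℂ} (hM : M.IsHermitian)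
    (μ : ℝ) (x : EuclideanSpace ℂ (Fin d)) (hx : x ≠ 0)
    (hMx : M *ᵥ (x : Fin d → ℂ) = (μ : ℂ) • (x : Fin d → ℂ)) :
    ∃ i, hM.eigenvalues i = μ := by
  have hex : ∃ i, ⟪hM.eigenvectorBasis i, x⟫_ℂ ≠ 0 := by
    by_contra h; push_neg at h
    apply hx
    have h2 := hM.eigenvectorBasis.sum_repr' x
    simpa [h] using h2.symm
  obtain ⟨i, hi⟩ := hex
  refine ⟨i, ?_⟩
  set e : EuclideanSpace ℂ (Fin d) := hM.eigenvectorBasis i with he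
  have h1 : ⟪e, (WithLp.toLp 2 (M *ᵥ (x : Fin d → ℂ)) : EuclideanSpace ℂ (Fin d))⟫_ℂ
      = (hM.eigenvalues i : ℂ) * ⟪e, x⟫_ℂ := by
    calc ⟪e, (WithLp.toLp 2 (M *ᵥ (x : Fin d → ℂ)) : EuclideanSpace ℂ (Fin d))⟫_ℂ
        = star (e : Fin d → ℂ) ⬝ᵥ (M *ᵥ (x : Fin d → ℂ)) :=
            (EuclideanSpace.inner_eq_star_dotProduct _ _).trans (dotProduct_comm _ _)
      _ = (star (e : Fin d → ℂ) ᵥ* M) ⬝ᵥ (x : Fin d → ℂ) := dotProduct_mulVec _ _ _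
      _ = star (M *ᵥ (e : Fin d → ℂ)) ⬝ᵥ (x : Fin d → ℂ) := by rw [star_mulVec, hM.eq]
      _ = star ((hM.eigenvalues i) • (e : Fin d → ℂ)) ⬝ᵥ (x : Fin d → ℂ) := by
          exact congrArg (fun v => star v ⬝ᵥ (x : Fin d → ℂ)) (hM.mulVec_eigenvectorBasis i)
      _ = (hM.eigenvalues i : ℂ) * ⟪e, x⟫_ℂ := by
          rw [star_smul, smul_dotProduct, star_trivial, Complex.real_smul]
          rw [EuclideanSpace.inner_eq_star_dotProduct, dotProduct_comm]
  have h2 : ⟪e, (WithLp.toLp 2 (M *ᵥ (x : Fin d → ℂ)) : EuclideanSpace ℂ (Fin d))⟫_ℂ = (μ : ℂ) * ⟪e, x⟫_ℂ := by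
    rw [hMx]
    exact inner_smul_right _ _ _
  have := h1.symm.trans h2
  exact_mod_cast mul_right_cancel₀ hi this

lemma rayleigh_bound {d : ℕ} {y z x : EuclideanSpace ℂ (Fin d)}
    (hy : ‖y‖ = 1) (hz : ‖z‖ = 1) (hx : ‖x‖ = 1) :
    ‖⟪y, x⟫_ℂ‖ ^ 2 + ‖⟪z, x⟫_ℂ‖ ^ 2 ≤ 1 + ‖⟪y, z⟫_ℂ‖ := by
  set a := ⟪y, x⟫_ℂ with ha
  set b := ⟪z, x⟫_ℂ with hb
  set c := ⟪y, z⟫_ℂ with hc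
  set w : EuclideanSpace ℂ (Fin d) := a • y + b • z with hw
  have hwx : ⟪w, x⟫_ℂ = ((‖a‖ ^ 2 + ‖b‖ ^ 2 : ℝ) : ℂ) := by
    rw [hw, inner_add_left, inner_smul_left, inner_smul_left, ← ha, ← hb]
    rw [RCLike.conj_mul, RCLike.conj_mul]
    push_cast
    ring_nf
    rfl
  have hcs : ‖a‖ ^ 2 + ‖b‖ ^ 2 ≤ ‖w‖ := by
    have h := norm_inner_le_norm (𝕜 := ℂ) w x
    rw [hwx, hx, mul_one] at h
    calc ‖a‖ ^ 2 + ‖b‖ ^ 2 = ‖((‖a‖ ^ 2 + ‖b‖ ^ 2 : ℝ) : ℂ)‖ := by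
          rw [Complex.norm_real, Real.norm_eq_abs, abs_of_nonneg (by positivity)]
      _ ≤ ‖w‖ := h
  have hw2 : ‖w‖ ^ 2 ≤ ‖a‖ ^ 2 + ‖b‖ ^ 2 + 2 * (‖a‖ * ‖b‖ * ‖c‖) := by
    have h := norm_add_sq (𝕜 := ℂ) (a • y) (b • z)
    have h1 : ‖a • y‖ = ‖a‖ := by rw [norm_smul, hy, mul_one]
    have h2 : ‖b • z‖ = ‖b‖ := by rw [norm_smul, hz, mul_one]
    have h3 : RCLike.re ⟪a • y, b • z⟫_ℂ ≤ ‖a‖ * ‖b‖ * ‖c‖ := by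
      have hv : ⟪a • y, b • z⟫_ℂ = (starRingEnd ℂ) a * b * c := by
        rw [inner_smul_left, inner_smul_right, ← hc]; ring
      calc RCLike.re ⟪a • y, b • z⟫_ℂ ≤ ‖⟪a • y, b • z⟫_ℂ‖ := RCLike.re_le_norm _
        _ = ‖a‖ * ‖b‖ * ‖c‖ := by rw [hv, norm_mul, norm_mul, RCLike.norm_conj]
    rw [← hw] at h
    rw [h, h1, h2]
    nlinarith [h3]
  nlinarith [hcs, hw2, sq_nonneg (‖a‖ - ‖b‖), norm_nonneg a, norm_nonneg b, norm_nonneg c,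
    sq_nonneg (‖a‖ ^ 2 + ‖b‖ ^ 2 - 1 - ‖c‖), norm_nonneg w]

lemma eigenvalue_formula {d : ℕ} (y z : EuclideanSpace ℂ (Fin d))
    (hM : (projMat y + projMat z).IsHermitian) (i : Fin d) :
    hM.eigenvalues i
      = ‖⟪y, hM.eigenvectorBasis i⟫_ℂ‖ ^ 2 + ‖⟪z, hM.eigenvectorBasis i⟫_ℂ‖ ^ 2 := by
  set e : EuclideanSpace ℂ (Fin d) := hM.eigenvectorBasis i with he
  have hmv : (projMat y + projMat z) *ᵥ (e : Fin d → ℂ)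
      = ((⟪y, e⟫_ℂ • y + ⟪z, e⟫_ℂ • z : EuclideanSpace ℂ (Fin d)) : Fin d → ℂ) := by
    rw [Matrix.add_mulVec, mulVec_projMat, mulVec_projMat]
    rfl
  have h0 : hM.eigenvalues i = RCLike.re (dotProduct (star (e : Fin d → ℂ))
      ((projMat y + projMat z) *ᵥ (e : Fin d → ℂ))) := hM.eigenvalues_eq i
  rw [hmv] at h0
  have h1 : dotProduct (star (e : Fin d → ℂ))
      ((⟪y, e⟫_ℂ • y + ⟪z, e⟫_ℂ • z : EuclideanSpace ℂ (Fin d)) : Fin d → ℂ)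
      = ⟪e, ⟪y, e⟫_ℂ • y + ⟪z, e⟫_ℂ • z⟫_ℂ :=
    ((EuclideanSpace.inner_eq_star_dotProduct _ _).trans (dotProduct_comm _ _)).symm
  rw [h1, inner_add_right, inner_smul_right, inner_smul_right] at h0
  have h2 : ⟪e, y⟫_ℂ = (starRingEnd ℂ) ⟪y, e⟫_ℂ := (inner_conj_symm _ _).symm
  have h3 : ⟪e, z⟫_ℂ = (starRingEnd ℂ) ⟪z, e⟫_ℂ := (inner_conj_symm _ _).symm
  rw [h0, h2, h3]
  rw [mul_comm ⟪y, e⟫_ℂ, mul_comm ⟪z, e⟫_ℂ, RCLike.conj_mul, RCLike.conj_mul]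
  rw [map_add]
  norm_num [← Complex.ofReal_pow]

lemma lamMax_proj_add {d : ℕ} (hd : 0 < d) {y z : EuclideanSpace ℂ (Fin d)}
    (hy : ‖y‖ = 1) (hz : ‖z‖ = 1) :
    lamMax (projMat y + projMat z) = 1 + ‖⟪y, z⟫_ℂ‖ := by
  have hM : (projMat y + projMat z).IsHermitian :=
    (projMat_isHermitian y).add (projMat_isHermitian z)
  haveI : Nonempty (Fin d) := ⟨⟨0, hd⟩⟩
  rw [lamMax, dif_pos hM]
  apply le_antisymm
  · apply ciSup_le
    intro i
    rw [eigenvalue_formula y z hM i]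
    exact rayleigh_bound hy hz (hM.eigenvectorBasis.orthonormal.1 i)
  · set c := ⟪y, z⟫_ℂ with hc
    have hyy : ⟪y, y⟫_ℂ = 1 := by
      rw [inner_self_eq_norm_sq_to_K, hy]; norm_num
    have hzz : ⟪z, z⟫_ℂ = 1 := by
      rw [inner_self_eq_norm_sq_to_K, hz]; norm_num
    have hzy : ⟪z, y⟫_ℂ = (starRingEnd ℂ) c := by rw [← inner_conj_symm, ← hc]
    have hx : ∃ x : EuclideanSpace ℂ (Fin d), x ≠ 0 ∧
        (projMat y + projMat z) *ᵥ (x : Fin d → ℂ)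
          = ((1 + ‖c‖ : ℝ) : ℂ) • (x : Fin d → ℂ) := by
      by_cases h0 : c = 0
      · refine ⟨y, fun h => by rw [h] at hy; simp at hy, ?_⟩
        rw [Matrix.add_mulVec, mulVec_projMat, mulVec_projMat, hyy, hzy, h0]
        simp [h0]
      · refine ⟨c • y + (‖c‖ : ℂ) • z, ?_, ?_⟩
        · intro h
          have h1 : ⟪y, c • y + (‖c‖ : ℂ) • z⟫_ℂ = 0 := by rw [h, inner_zero_right]
          rw [inner_add_right, inner_smul_right, inner_smul_right, hyy, ← hc] at h1
          have h2 : c * (1 + (‖c‖ : ℂ)) = 0 := by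
            rw [← h1]; ring
          rcases mul_eq_zero.1 h2 with h3 | h3
          · exact h0 h3
          · have : (1 + (‖c‖ : ℂ)) ≠ 0 := by
              intro h4
              have := congrArg Complex.re h4
              simp at this
              linarith [norm_nonneg c, this]
            exact this h3
        · rw [Matrix.add_mulVec, mulVec_projMat, mulVec_projMat]
          rw [inner_add_right, inner_smul_right, inner_smul_right,
            inner_add_right, inner_smul_right, inner_smul_right, hyy, hzz, hzy, ← hc]
          have hcc : c * (starRingEnd ℂ) c = (((‖c‖ : ℝ) ^ 2 : ℝ) : ℂ) := by
            rw [Complex.mul_conj, Complex.normSq_eq_norm_sq]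
          have hco : ((c • y + (‖c‖ : ℂ) • z : EuclideanSpace ℂ (Fin d)) : Fin d → ℂ)
              = c • (y : Fin d → ℂ) + (‖c‖ : ℂ) • (z : Fin d → ℂ) := rfl
          rw [hco, smul_add, smul_smul, smul_smul]
          congr 1
          · congr 1
            push_cast
            ring
          · congr 1
            rw [hcc]
            push_cast
            ring
    obtain ⟨x, hx0, hxe⟩ := hx
    obtain ⟨i, hi⟩ := exists_eigenvalue_eq hM _ x hx0 hxe
    rw [← hi]
    exact le_ciSup (Set.Finite.bddAbove (Set.finite_range _)) i

lemma parseval {d : ℕ} (b : OrthonormalBasis (Fin d) ℂ (EuclideanSpace ℂ (Fin d)))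
    (x : EuclideanSpace ℂ (Fin d)) : ∑ i, ‖⟪b i, x⟫_ℂ‖ ^ 2 = ‖x‖ ^ 2 := by
  have h := b.sum_inner_mul_inner x x
  have h2 : ∀ i, ⟪x, b i⟫_ℂ * ⟪b i, x⟫_ℂ = ((‖⟪b i, x⟫_ℂ‖ ^ 2 : ℝ) : ℂ) := fun i => by
    rw [← inner_conj_symm x (b i), RCLike.conj_mul]
    norm_cast
  rw [Finset.sum_congr rfl (fun i _ => h2 i), inner_self_eq_norm_sq_to_K] at h
  exact Complex.ofReal_injective (((Complex.ofReal_sum _ _).trans h).trans (Complex.ofReal_pow _ _).symm)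

theorem stmt_0 (d : ℕ) (hd : 2 ≤ d)
    (Y Z : OrthonormalBasis (Fin d) ℂ (EuclideanSpace ℂ (Fin d))) :
    (∑ i, ∑ j, ‖⟪Y i, Z j⟫_ℂ‖) ≤ d * Real.sqrt d ∧
    ((∑ i, ∑ j, ‖⟪Y i, Z j⟫_ℂ‖) = d * Real.sqrt d ↔
      ∀ i j, ‖⟪Y i, Z j⟫_ℂ‖ = 1 / Real.sqrt d) ∧
    (1 / (2 * (d : ℝ) ^ 2) * ∑ i, ∑ j, lamMax (projMat (Y i) + projMat (Z j))
        ≤ 1 / 2 * (1 + 1 / Real.sqrt d)) ∧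
    (1 / (2 * (d : ℝ) ^ 2) * ∑ i, ∑ j, lamMax (projMat (Y i) + projMat (Z j))
        = 1 / 2 * (1 + 1 / Real.sqrt d) ↔
      ∀ i j, ‖⟪Y i, Z j⟫_ℂ‖ = 1 / Real.sqrt d) := by
  have hd0 : 0 < d := lt_of_lt_of_le (by norm_num) hd
  have hD0 : (0:ℝ) < (d:ℝ) := by exact_mod_cast hd0
  set s := Real.sqrt d with hs
  have hs0 : 0 < s := Real.sqrt_pos.2 hD0
  have hs2 : s ^ 2 = (d:ℝ) := Real.sq_sqrt (le_of_lt hD0)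
  have hsq : ∑ i, ∑ j, ‖⟪Y i, Z j⟫_ℂ‖ ^ 2 = (d : ℝ) := by
    rw [Finset.sum_comm]
    have h1 : ∀ j, ∑ i, ‖⟪Y i, Z j⟫_ℂ‖ ^ 2 = 1 := fun j => by
      rw [parseval Y (Z j), Z.orthonormal.1 j]; norm_num
    rw [Finset.sum_congr rfl (fun j _ => h1 j)]
    simp
  have hpt : ∀ i j : Fin d, ‖⟪Y i, Z j⟫_ℂ‖ ≤ (1 + d * ‖⟪Y i, Z j⟫_ℂ‖ ^ 2) / (2 * s) := by
    intro i j
    set f := ‖⟪Y i, Z j⟫_ℂ‖ with hf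
    rw [le_div_iff₀ (by positivity)]
    nlinarith [sq_nonneg (s * f - 1), hs2]
  have hbs : ∑ i, ∑ j, (1 + (d:ℝ) * ‖⟪Y i, Z j⟫_ℂ‖ ^ 2) / (2 * s) = (d:ℝ) * s := by
    simp only [← Finset.sum_div]
    have h1 : ∑ i : Fin d, ∑ j : Fin d, (1 + (d:ℝ) * ‖⟪Y i, Z j⟫_ℂ‖ ^ 2)
        = (d:ℝ)^2 + (d:ℝ) * (d:ℝ) := by
      simp only [Finset.sum_add_distrib, ← Finset.mul_sum]
      rw [hsq]
      simp [Finset.sum_const]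
      push_cast
      ring
    rw [h1, ← hs2]
    field_simp
    ring
  have part1 : (∑ i, ∑ j, ‖⟪Y i, Z j⟫_ℂ‖) ≤ (d:ℝ) * s := by
    rw [← hbs]
    exact Finset.sum_le_sum fun i _ => Finset.sum_le_sum fun j _ => hpt i j
  have part2 : (∑ i, ∑ j, ‖⟪Y i, Z j⟫_ℂ‖) = (d:ℝ) * s ↔
      ∀ i j, ‖⟪Y i, Z j⟫_ℂ‖ = 1 / s := by
    constructor
    · intro hEq
      have hzero : ∑ i, ∑ j,
          ((1 + (d:ℝ) * ‖⟪Y i, Z j⟫_ℂ‖ ^ 2) / (2 * s) - ‖⟪Y i, Z j⟫_ℂ‖) = 0 := by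
        simp only [Finset.sum_sub_distrib]
        rw [hbs, hEq]
        ring
      have hnn : ∀ i j : Fin d,
          0 ≤ (1 + (d:ℝ) * ‖⟪Y i, Z j⟫_ℂ‖ ^ 2) / (2 * s) - ‖⟪Y i, Z j⟫_ℂ‖ :=
        fun i j => by linarith [hpt i j]
      have hall : ∀ i j : Fin d,
          (1 + (d:ℝ) * ‖⟪Y i, Z j⟫_ℂ‖ ^ 2) / (2 * s) - ‖⟪Y i, Z j⟫_ℂ‖ = 0 := by
        intro i j
        have h1 := (Finset.sum_eq_zero_iff_of_nonneg
          (fun i _ => Finset.sum_nonneg (fun j _ => hnn i j))).1 hzero i (Finset.mem_univ i)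
        exact (Finset.sum_eq_zero_iff_of_nonneg (fun j _ => hnn i j)).1 h1 j (Finset.mem_univ j)
      intro i j
      set f := ‖⟪Y i, Z j⟫_ℂ‖ with hf
      have hij := hall i j
      rw [sub_eq_zero, div_eq_iff (by positivity : (2:ℝ) * s ≠ 0)] at hij
      rw [← hf] at hij
      have h2 : (s * f - 1) ^ 2 = 0 := by linear_combination f ^ 2 * hs2 + hij
      have h3 : s * f - 1 = 0 := by
        have := sq_eq_zero_iff.1 h2
        exact this
      field_simp
      linarith
    · intro hall
      rw [Finset.sum_congr rfl fun i _ => Finset.sum_congr rfl fun j _ => hall i j]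
      simp only [Finset.sum_const, Finset.card_univ, Fintype.card_fin, nsmul_eq_mul]
      rw [← hs2]
      field_simp
  have hT : ∑ i, ∑ j, lamMax (projMat (Y i) + projMat (Z j))
      = (d:ℝ)^2 + ∑ i, ∑ j, ‖⟪Y i, Z j⟫_ℂ‖ := by
    rw [Finset.sum_congr rfl fun i _ => Finset.sum_congr rfl fun j _ =>
      lamMax_proj_add hd0 (Y.orthonormal.1 i) (Z.orthonormal.1 j)]
    simp only [Finset.sum_add_distrib, Finset.sum_const, Finset.card_univ, Fintype.card_fin,
      nsmul_eq_mul, mul_one]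
    push_cast
    ring
  have hrhs : (1:ℝ)/2*(1+1/s) = 1/(2*(d:ℝ)^2) * ((d:ℝ)^2 + (d:ℝ)*s) := by
    rw [← hs2]
    field_simp
  have hA0 : (0:ℝ) < 1/(2*(d:ℝ)^2) := by positivity
  refine ⟨part1, part2, ?_, ?_⟩
  · rw [hT, hrhs]
    exact mul_le_mul_of_nonneg_left (by linarith [part1]) (le_of_lt hA0)
  · rw [hT, hrhs]
    constructor
    · intro h
      apply part2.1
      have := mul_left_cancel₀ (ne_of_gt hA0) h
      linarith
    · intro h
      rw [part2.2 h]
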